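/- For all integers n ≥ 7 and t ≥ ⌈n/2⌉ − 2, the eternal cop number of the cycle on n vertices satisfies c_t^∞(C_n) = 2. -/

import Mathlib

open SimpleGraph
open Fin.NatCast Fin.CommRing

/-- `c'` is a one-step move of the `k` cops from configuration `c` in `G`:
each cop stays put or moves to an adjacent vertex. -/
def OneStepMove {V : Type*} (G : SimpleGraph V) {k : ℕ} (c c' : Fin k → V) : Prop :=
  ∀ i, c' i = c i ∨ G.Adj (c i) (c' i)

/-- The capture predicate `Cap G T s c r`: from cop configuration `c`, with the robber at `r`,
the cops can capture the robber within `s` time-steps, ending in a configuration in `T`. -/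
def Cap {V : Type*} (G : SimpleGraph V) {k : ℕ} (T : Set (Fin k → V)) :
    ℕ → (Fin k → V) → V → Prop
  | 0, _, _ => False
  | s + 1, c, r => ∃ c', OneStepMove G c c' ∧
      (((∃ i, c' i = r) ∧ c' ∈ T) ∨
        ∀ r', (r' = r ∨ G.Adj r r') →
          (((∃ i, c' i = r') ∧ c' ∈ T) ∨ Cap G T s c' r'))

/-- `k` cops can win a single play on `G` within `t` time-steps. -/
def TimedWin {V : Type*} (G : SimpleGraph V) (k t : ℕ) : Prop :=
  ∃ c : Fin k → V, ∀ r : V,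
    (∃ i, c i = r) ∨ Cap G (Set.univ : Set (Fin k → V)) t c r

/-- The `t`-capture cop number `c_t(G)`. -/
noncomputable def captureCopNumber {V : Type*} (G : SimpleGraph V) (t : ℕ) : ℕ :=
  sInf {k | 1 ≤ k ∧ TimedWin G k t}

/-- `k` cops can win the eternal game on `G`, capturing each robber within `t` time-steps. -/
def EternalWin {V : Type*} (G : SimpleGraph V) (k t : ℕ) : Prop :=
  ∃ T : Set (Fin k → V), T.Nonempty ∧
    ∀ c ∈ T, ∀ r : V, (∃ i, c i = r) ∨ Cap G T t c r

/-- The eternal cop number `c_t^∞(G)`. -/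
noncomputable def eternalCopNumber {V : Type*} (G : SimpleGraph V) (t : ℕ) : ℕ :=
  sInf {k | 1 ≤ k ∧ EternalWin G k t}

/-- The cop number `c(G)`. -/
noncomputable def copNumber {V : Type*} (G : SimpleGraph V) : ℕ :=
  sInf {k | ∃ t, 1 ≤ t ∧ captureCopNumber G t ≤ k}

/-- `ℓ_i = ⌈(1 - 2^{-i}) t - 1/2⌉`. -/
def ell (t i : ℕ) : ℕ :=
  (⌈((1 : ℚ) - 2 ^ (-(i : ℤ))) * (t : ℚ) - 1 / 2⌉).toNat

/-- The subgraph of `G` induced by `W` is a retract of `G`. -/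
def IsRetract {V : Type*} (G : SimpleGraph V) (W : Set V) : Prop :=
  ∃ f : V → V, (∀ v, f v ∈ W) ∧ (∀ w ∈ W, f w = w) ∧
    ∀ u v, G.Adj u v → f u = f v ∨ G.Adj (f u) (f v)

/-- The radius of a graph. -/
noncomputable def graphRadius {V : Type*} (G : SimpleGraph V) : ℕ :=
  sInf {r | ∃ v, ∀ u, G.dist v u ≤ r}

/-! ### Auxiliary lemmas for the cycle -/

section CycleAux

variable {n : ℕ} [NeZero n]

private lemma EC.cap_succ_iff {V : Type*} (G : SimpleGraph V) {k : ℕ} (T : Set (Fin k → V))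
    (s : ℕ) (c : Fin k → V) (r : V) :
    Cap G T (s+1) c r ↔ ∃ c', OneStepMove G c c' ∧
      (((∃ i, c' i = r) ∧ c' ∈ T) ∨
        ∀ r', (r' = r ∨ G.Adj r r') →
          (((∃ i, c' i = r') ∧ c' ∈ T) ∨ Cap G T s c' r')) := Iff.rfl

private lemma EC.adj_add_one (hn : 3 ≤ n) (x : Fin n) : (cycleGraph n).Adj x (x + 1) := by
  rw [cycleGraph_adj']
  right
  have h1 : ((1:ℕ) : Fin n) = 1 := Nat.cast_one
  have : x + 1 - x = ((1:ℕ) : Fin n) := by rw [h1]; ring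
  rw [this, Fin.val_cast_of_lt (by omega)]

private lemma EC.adj_sub_one (hn : 3 ≤ n) (x : Fin n) : (cycleGraph n).Adj x (x - 1) := by
  have := (EC.adj_add_one hn (x - 1)).symm
  simpa using this

private lemma EC.adj_cases (hn : 3 ≤ n) {r r' : Fin n} (h : (cycleGraph n).Adj r r') :
    r' = r + 1 ∨ r' = r - 1 := by
  rw [cycleGraph_adj'] at h
  rcases h with h | h
  · right
    have h2 : r - r' = ((1:ℕ) : Fin n) := by
      apply Fin.ext; rw [Fin.val_cast_of_lt (by omega)]; exact h
    rw [Nat.cast_one] at h2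
    rw [← h2]; ring
  · left
    have h2 : r' - r = ((1:ℕ) : Fin n) := by
      apply Fin.ext; rw [Fin.val_cast_of_lt (by omega)]; exact h
    rw [Nat.cast_one] at h2
    rw [← h2]; ring

private lemma EC.natCast_split (j k : ℕ) (h : k ≤ j) :
    ((j : ℕ) : Fin n) = ((j - k : ℕ) : Fin n) + ((k : ℕ) : Fin n) := by
  conv_lhs => rw [show j = (j - k) + k by omega]
  rw [Nat.cast_add]

/-- The family of "good" cop configurations: the second cop is `d` steps clockwise from the
first, with `m ≤ d ≤ n - m`. -/
private def EC.Tset (n m : ℕ) [NeZero n] : Set (Fin 2 → Fin n) :=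
  {c | ∃ d : ℕ, m ≤ d ∧ d + m ≤ n ∧ c 1 = c 0 + (d : Fin n)}

private lemma EC.cap_perm {V : Type*} (G : SimpleGraph V) {k : ℕ} {T : Set (Fin k → V)}
    (σ : Equiv.Perm (Fin k)) (hT : ∀ c ∈ T, c ∘ σ ∈ T) :
    ∀ s (c : Fin k → V) (r : V), Cap G T s c r → Cap G T s (c ∘ σ) r := by
  intro s
  induction s with
  | zero => intro c r h; exact h.elim
  | succ s ih =>
    rintro c r ⟨c', h1, h2⟩
    refine ⟨c' ∘ σ, fun i => h1 (σ i), ?_⟩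
    rcases h2 with ⟨⟨i, hi⟩, hT'⟩ | h2
    · exact Or.inl ⟨⟨σ⁻¹ i, by simp [Function.comp, hi]⟩, hT c' hT'⟩
    · right
      intro r' hr'
      rcases h2 r' hr' with ⟨⟨i, hi⟩, hT'⟩ | hcap
      · exact Or.inl ⟨⟨σ⁻¹ i, by simp [Function.comp, hi]⟩, hT c' hT'⟩
      · exact Or.inr (ih c' r' hcap)

private lemma EC.Tset_swap {m : ℕ} :
    ∀ c ∈ EC.Tset n m, c ∘ (Equiv.swap (0 : Fin 2) 1) ∈ EC.Tset n m := by
  rintro c ⟨d, hd1, hd2, hd3⟩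
  refine ⟨n - d, by omega, by omega, ?_⟩
  have hc : ((d : Fin n)) + ((n - d : ℕ) : Fin n) = 0 := by
    rw [← Nat.cast_add, show d + (n - d) = n by omega, Fin.natCast_self]
  simp only [Function.comp, Equiv.swap_apply_left, Equiv.swap_apply_right]
  rw [hd3, add_assoc, hc, add_zero]

/-- The squeeze lemma: cops at `a` and `a + g`, robber strictly inside the clockwise arc
from `a` to `a + g`, can be captured in `g/2` steps, ending in `Tset n m`. -/
private lemma EC.squeeze (hn : 7 ≤ n) {m : ℕ} (hm2 : 2 ≤ m) (hm3 : m ≤ 3) :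
    ∀ s g, 2 ≤ g → m ≤ g → g + m ≤ n → g / 2 ≤ s →
    ∀ (a : Fin n) (j : ℕ), 1 ≤ j → j ≤ g - 1 →
    ∀ c : Fin 2 → Fin n, c 0 = a → c 1 = a + (g : Fin n) →
    Cap (cycleGraph n) (EC.Tset n m) s c (a + (j : Fin n)) := by
  have hn3 : 3 ≤ n := by omega
  intro s
  induction s with
  | zero => intro g hg2 _ _ hs; omega
  | succ s IH =>
    intro g hg2 hmg hgm hs a j hj1 hj2 c hc0 hc1
    rw [EC.cap_succ_iff]
    rcases eq_or_lt_of_le hj1 with hj1' | hj1'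
    · -- j = 1 : capture now, cop 0 steps on the robber, cop 1 steps away
      refine ⟨![a + 1, a + (g : Fin n) + 1], ?_, Or.inl ⟨⟨0, ?_⟩, g, hmg, by omega, ?_⟩⟩
      · intro i
        fin_cases i <;> simp [hc0, hc1]
        · exact Or.inr (EC.adj_add_one hn3 a)
        · exact Or.inr (EC.adj_add_one hn3 _)
      · simp only [Matrix.cons_val_zero]
        rw [← hj1', Nat.cast_one]
      · simp only [Matrix.cons_val_zero, Matrix.cons_val_one, Matrix.head_cons]
        ring
    rcases eq_or_lt_of_le hj2 with hj2' | hj2'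
    · -- j = g - 1 : capture now with cop 1
      have hgcast : ((g : ℕ) : Fin n) = ((g - 1 : ℕ) : Fin n) + 1 := by
        rw [EC.natCast_split g 1 (by omega), Nat.cast_one]
      refine ⟨![a - 1, a + (g : Fin n) - 1], ?_, Or.inl ⟨⟨1, ?_⟩, g, hmg, by omega, ?_⟩⟩
      · intro i
        fin_cases i <;> simp [hc0, hc1]
        · exact Or.inr (EC.adj_sub_one hn3 a)
        · exact Or.inr (EC.adj_sub_one hn3 _)
      · simp only [Matrix.cons_val_one, Matrix.head_cons, Matrix.cons_val_zero]
        rw [hj2', hgcast]; ring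
      · simp only [Matrix.cons_val_zero, Matrix.cons_val_one, Matrix.head_cons]
        rw [hgcast]; ring
    -- middle case : 2 ≤ j ≤ g - 2, in particular g ≥ 4
    have hj2'' : j ≤ g - 2 := by omega
    have hg4 : 4 ≤ g := by omega
    rcases Nat.even_or_odd g with hge | hgo
    · -- g even : only cop 0 advances; new gap g - 1
      have hge' : g % 2 = 0 := Nat.even_iff.mp hge
      have hgcast : ((g : ℕ) : Fin n) = ((g - 1 : ℕ) : Fin n) + 1 := by
        rw [EC.natCast_split g 1 (by omega), Nat.cast_one]
      set c' : Fin 2 → Fin n := ![a + 1, a + (g : Fin n)] with hc'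
      have hc'0 : c' 0 = a + 1 := rfl
      have hc'1 : c' 1 = (a + 1) + ((g - 1 : ℕ) : Fin n) := by
        show a + (g : Fin n) = _
        rw [hgcast]; ring
      have hT' : c' ∈ EC.Tset n m := ⟨g - 1, by omega, by omega, by rw [hc'1, hc'0]⟩
      refine ⟨c', ?_, Or.inr ?_⟩
      · intro i
        fin_cases i <;> simp [hc0, hc1, hc']
        exact Or.inr (EC.adj_add_one hn3 a)
      · intro r' hr'
        have hr3 : r' = a + (j : Fin n) ∨ r' = a + (j : Fin n) + 1 ∨ r' = a + (j : Fin n) - 1 := by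
          rcases hr' with h | h
          · exact Or.inl h
          · rcases EC.adj_cases hn3 h with h | h
            · exact Or.inr (Or.inl h)
            · exact Or.inr (Or.inr h)
        have hbud : (g - 1) / 2 ≤ s := by omega
        rcases hr3 with h | h | h
        · -- robber stays : offset j - 1 in the (g-1)-arc from a+1
          right
          have : r' = (a + 1) + ((j - 1 : ℕ) : Fin n) := by
            rw [h, EC.natCast_split j 1 (by omega), Nat.cast_one]; ring
          rw [this]
          exact IH (g - 1) (by omega) (by omega) (by omega) hbud (a + 1) (j - 1)
            (by omega) (by omega) c' hc'0 hc'1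
        · -- robber moves forward : offset j
          right
          have : r' = (a + 1) + ((j : ℕ) : Fin n) := by rw [h]; ring
          rw [this]
          exact IH (g - 1) (by omega) (by omega) (by omega) hbud (a + 1) j
            (by omega) (by omega) c' hc'0 hc'1
        · -- robber moves backward
          rcases eq_or_lt_of_le (show 2 ≤ j by omega) with hj3 | hj3
          · -- j = 2 : robber steps onto cop 0
            left
            refine ⟨⟨0, ?_⟩, hT'⟩
            rw [hc'0, h, ← hj3]
            rw [show ((2:ℕ) : Fin n) = 1 + 1 by push_cast; ring]; ring
          · right
            have : r' = (a + 1) + ((j - 2 : ℕ) : Fin n) := by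
              rw [h, EC.natCast_split j 2 (by omega)]
              rw [show ((2:ℕ) : Fin n) = 1 + 1 by push_cast; ring]; ring
            rw [this]
            exact IH (g - 1) (by omega) (by omega) (by omega) hbud (a + 1) (j - 2)
              (by omega) (by omega) c' hc'0 hc'1
    · -- g odd (hence g ≥ 5) : both cops advance; new gap g - 2
      have hgo' : g % 2 = 1 := Nat.odd_iff.mp hgo
      have hg5 : 5 ≤ g := by omega
      have hgcast : ((g : ℕ) : Fin n) = ((g - 2 : ℕ) : Fin n) + (1 + 1) := by
        rw [EC.natCast_split g 2 (by omega),
          show ((2:ℕ) : Fin n) = 1 + 1 by push_cast; ring]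
      set c' : Fin 2 → Fin n := ![a + 1, a + (g : Fin n) - 1] with hc'
      have hc'0 : c' 0 = a + 1 := rfl
      have hc'1 : c' 1 = (a + 1) + ((g - 2 : ℕ) : Fin n) := by
        show a + (g : Fin n) - 1 = _
        rw [hgcast]; ring
      have hT' : c' ∈ EC.Tset n m := ⟨g - 2, by omega, by omega, by rw [hc'1, hc'0]⟩
      refine ⟨c', ?_, Or.inr ?_⟩
      · intro i
        fin_cases i <;> simp [hc0, hc1, hc']
        · exact Or.inr (EC.adj_add_one hn3 a)
        · exact Or.inr (EC.adj_sub_one hn3 _)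
      · intro r' hr'
        have hr3 : r' = a + (j : Fin n) ∨ r' = a + (j : Fin n) + 1 ∨ r' = a + (j : Fin n) - 1 := by
          rcases hr' with h | h
          · exact Or.inl h
          · rcases EC.adj_cases hn3 h with h | h
            · exact Or.inr (Or.inl h)
            · exact Or.inr (Or.inr h)
        have hbud : (g - 2) / 2 ≤ s := by omega
        rcases hr3 with h | h | h
        · right
          have : r' = (a + 1) + ((j - 1 : ℕ) : Fin n) := by
            rw [h, EC.natCast_split j 1 (by omega), Nat.cast_one]; ring
          rw [this]
          exact IH (g - 2) (by omega) (by omega) (by omega) hbud (a + 1) (j - 1)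
            (by omega) (by omega) c' hc'0 hc'1
        · -- robber moves forward
          rcases eq_or_lt_of_le hj2'' with hj3 | hj3
          · -- j = g - 2 : robber steps onto cop 1
            left
            refine ⟨⟨1, ?_⟩, hT'⟩
            rw [hc'1, h, hj3]; ring
          · right
            have : r' = (a + 1) + ((j : ℕ) : Fin n) := by rw [h]; ring
            rw [this]
            exact IH (g - 2) (by omega) (by omega) (by omega) hbud (a + 1) j
              (by omega) (by omega) c' hc'0 hc'1
        · -- robber moves backward
          rcases eq_or_lt_of_le (show 2 ≤ j by omega) with hj3 | hj3
          · left
            refine ⟨⟨0, ?_⟩, hT'⟩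
            rw [hc'0, h, ← hj3]
            rw [show ((2:ℕ) : Fin n) = 1 + 1 by push_cast; ring]; ring
          · right
            have : r' = (a + 1) + ((j - 2 : ℕ) : Fin n) := by
              rw [h, EC.natCast_split j 2 (by omega)]
              rw [show ((2:ℕ) : Fin n) = 1 + 1 by push_cast; ring]; ring
            rw [this]
            exact IH (g - 2) (by omega) (by omega) (by omega) hbud (a + 1) (j - 2)
              (by omega) (by omega) c' hc'0 hc'1

/-- Two cops can win the eternal game on the cycle. -/
private lemma EC.two_cops_win (hn : 7 ≤ n) {m t : ℕ} (hm2 : 2 ≤ m) (hm3 : m ≤ 3)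
    (ht : (n - m) / 2 ≤ t) : EternalWin (cycleGraph n) 2 t := by
  have hn3 : 3 ≤ n := by omega
  refine ⟨EC.Tset n m, ⟨![0, (m : Fin n)], m, le_rfl, by omega, by simp⟩, ?_⟩
  rintro c ⟨d, hd1, hd2, hd3⟩ r
  set j : ℕ := (r - c 0).val with hj
  have hjn : j < n := Fin.is_lt _
  have hr : r = c 0 + (j : Fin n) := by
    rw [hj, Fin.cast_val_eq_self]; ring
  rcases Nat.eq_zero_or_pos j with hj0 | hj0
  · exact Or.inl ⟨0, by rw [hr, hj0]; simp⟩
  rcases lt_trichotomy j d with hjd | hjd | hjd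
  · -- robber inside the clockwise arc from c 0 to c 1
    right
    rw [hr]
    exact EC.squeeze hn hm2 hm3 t d (by omega) hd1 hd2
      (le_trans (Nat.div_le_div_right (by omega)) ht) (c 0) j (by omega) (by omega)
      c rfl hd3
  · exact Or.inl ⟨1, by rw [hd3, hr, hjd]⟩
  · -- robber inside the other arc; view it as the arc from c 1 to c 0
    right
    have hkey : ((d : Fin n)) + ((n - d : ℕ) : Fin n) = 0 := by
      rw [← Nat.cast_add, show d + (n - d) = n by omega, Fin.natCast_self]
    have hb0 : (![c 1, c 0] : Fin 2 → Fin n) 0 = c 1 := rfl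
    have hb1 : (![c 1, c 0] : Fin 2 → Fin n) 1 = c 1 + ((n - d : ℕ) : Fin n) := by
      show c 0 = _
      rw [hd3, add_assoc, hkey, add_zero]
    have hrr : r = c 1 + ((j - d : ℕ) : Fin n) := by
      rw [hd3, hr, EC.natCast_split j d (by omega)]; ring
    have hcap : Cap (cycleGraph n) (EC.Tset n m) t ![c 1, c 0] r := by
      rw [hrr]
      exact EC.squeeze hn hm2 hm3 t (n - d) (by omega) (by omega) (by omega)
        (le_trans (Nat.div_le_div_right (by omega)) ht) (c 1) (j - d) (by omega) (by omega)
        ![c 1, c 0] hb0 hb1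
    have := EC.cap_perm (cycleGraph n) (Equiv.swap (0 : Fin 2) 1) EC.Tset_swap t _ r hcap
    have hfix : (![c 1, c 0] : Fin 2 → Fin n) ∘ (Equiv.swap (0 : Fin 2) 1) = c := by
      funext i
      fin_cases i <;> simp [Function.comp]
    rwa [hfix] at this

/-- One cop cannot win the eternal game on the cycle. -/
private lemma EC.one_cop_fails (hn : 7 ≤ n) (t : ℕ) : ¬ EternalWin (cycleGraph n) 1 t := by
  have hn3 : 3 ≤ n := by omega
  rintro ⟨T, ⟨c₀, hc₀⟩, hT⟩
  have evade : ∀ s (c : Fin 1 → Fin n) (r : Fin n),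
      2 ≤ (r - c 0).val → (r - c 0).val ≤ n - 2 → ¬ Cap (cycleGraph n) T s c r := by
    intro s
    induction s with
    | zero => intro c r _ _ h; exact h
    | succ s IH =>
      rintro c r h2 hn2 ⟨c', hmv, hcap⟩
      set δ : ℕ := (r - c 0).val with hδdef
      have hδ : r = c 0 + (δ : Fin n) := by rw [hδdef, Fin.cast_val_eq_self]; ring
      -- the cop's new position is still at "offset" between 1 and n-1 from the robber
      have hstep : 1 ≤ (r - c' 0).val ∧ (r - c' 0).val ≤ n - 1 := by
        rcases hmv 0 with h | h
        · rw [h]; exact ⟨by omega, by omega⟩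
        · rcases EC.adj_cases hn3 h with h | h
          · have : r - c' 0 = ((δ - 1 : ℕ) : Fin n) := by
              rw [h, hδ, EC.natCast_split δ 1 (by omega), Nat.cast_one]; ring
            rw [this, Fin.val_cast_of_lt (by omega)]
            exact ⟨by omega, by omega⟩
          · have : r - c' 0 = ((δ + 1 : ℕ) : Fin n) := by
              rw [h, hδ, show ((δ + 1 : ℕ) : Fin n) = (δ : Fin n) + 1 by push_cast; ring]; ring
            rw [this, Fin.val_cast_of_lt (by omega)]
            exact ⟨by omega, by omega⟩
      set ε : ℕ := (r - c' 0).val with hεdef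
      have hε : r = c' 0 + (ε : Fin n) := by rw [hεdef, Fin.cast_val_eq_self]; ring
      have hnoton : ∀ r'' : Fin n, 1 ≤ (r'' - c' 0).val → ¬ (∃ i, c' i = r'') := by
        rintro r'' hr'' ⟨i, hi⟩
        have hi0 : i = 0 := Subsingleton.elim _ _
        rw [hi0] at hi
        rw [hi] at hr''
        simp at hr''
      have hkill : ∀ r'' : Fin n, 2 ≤ (r'' - c' 0).val → (r'' - c' 0).val ≤ n - 2 →
          (r'' = r ∨ (cycleGraph n).Adj r r'') → False := by
        intro r'' ha hb hadj
        rcases hcap with ⟨hon, _⟩ | hall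
        · exact hnoton r (by omega) hon
        · rcases hall r'' hadj with ⟨hon, _⟩ | hc
          · exact hnoton r'' (by omega) hon
          · exact IH c' r'' ha hb hc
      rcases lt_trichotomy ε 2 with hε1 | hε1 | hε1
      · -- ε = 1 : robber moves forward
        have hε1' : ε = 1 := by omega
        have hveq : r + 1 - c' 0 = ((2 : ℕ) : Fin n) := by
          rw [hε, hε1', show ((2:ℕ) : Fin n) = 1 + 1 by push_cast; ring, Nat.cast_one]; ring
        have hv : (r + 1 - c' 0).val = 2 := by
          rw [hveq, Fin.val_cast_of_lt (by omega)]
        exact hkill (r + 1) (by omega) (by omega) (Or.inr (EC.adj_add_one hn3 r))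
      ·
        exact hkill r (by omega) (by omega) (Or.inl rfl)
      · rcases lt_or_ge ε (n - 1) with hε2 | hε2
        · exact hkill r (by omega) (by omega) (Or.inl rfl)
        · -- ε = n - 1 : robber moves backward
          have hε2' : ε = n - 1 := by omega
          have hveq : r - 1 - c' 0 = ((n - 2 : ℕ) : Fin n) := by
            rw [hε, hε2', show ((n - 1 : ℕ) : Fin n) = ((n - 2 : ℕ) : Fin n) + 1 by
              rw [show n - 1 = (n - 2) + 1 by omega, Nat.cast_add, Nat.cast_one]]
            ring
          have hv : (r - 1 - c' 0).val = n - 2 := by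
            rw [hveq, Fin.val_cast_of_lt (by omega)]
          exact hkill (r - 1) (by omega) (by omega) (Or.inr (EC.adj_sub_one hn3 r))
  -- run the evasion against the robber at offset 2 from the single cop
  have h2 : ((2 : ℕ) : Fin n).val = 2 := Fin.val_cast_of_lt (by omega)
  have hoff : (c₀ 0 + ((2:ℕ) : Fin n) - c₀ 0).val = 2 := by
    rw [show c₀ 0 + ((2:ℕ) : Fin n) - c₀ 0 = ((2:ℕ) : Fin n) by ring, h2]
  rcases hT c₀ hc₀ (c₀ 0 + ((2:ℕ) : Fin n)) with ⟨i, hi⟩ | hcap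
  · have hi0 : i = 0 := Subsingleton.elim _ _
    rw [hi0] at hi
    rw [← hi] at hoff
    simp at hoff
  · exact evade t c₀ _ (by omega) (by omega) hcap

end CycleAux

/-- for `n ≥ 7` and `t ≥ ⌈n/2⌉ − 2`, `c_t^∞(C_n) = 2`. -/
theorem eternalCopNumber_cycle_large_t (n t : ℕ) (hn : 7 ≤ n) (ht1 : 1 ≤ t)
    (ht : ⌈(n : ℚ) / 2⌉ - 2 ≤ (t : ℤ)) :
    eternalCopNumber (SimpleGraph.cycleGraph n) t = 2 := by
  haveI : NeZero n := ⟨by omega⟩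
  -- numeric bound : n ≤ 2 t + 4
  have hceil : (n : ℤ) ≤ 2 * ⌈(n : ℚ) / 2⌉ := by
    have h := Int.le_ceil ((n : ℚ) / 2)
    have : (n : ℚ) ≤ 2 * (⌈(n : ℚ) / 2⌉ : ℚ) := by linarith
    exact_mod_cast this
  have hnt : n ≤ 2 * t + 4 := by omega
  set m : ℕ := 3 - n % 2 with hm
  have hwin : EternalWin (SimpleGraph.cycleGraph n) 2 t :=
    EC.two_cops_win (m := m) hn (by omega) (by omega) (by omega)
  have h2 : 2 ∈ {k | 1 ≤ k ∧ EternalWin (SimpleGraph.cycleGraph n) k t} := ⟨by omega, hwin⟩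
  apply le_antisymm (Nat.sInf_le h2)
  apply le_csInf ⟨2, h2⟩
  rintro k ⟨hk1, hkw⟩
  by_contra hk
  have hk1' : k = 1 := by omega
  rw [hk1'] at hkw
  exact EC.one_cop_fails hn t hkw
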